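/- Let Λ = HahnSeries ℝ ℂ be the Novikov field and let D be an N × N matrix with entries in Λ[z^ℝ] = AddMonoidAlgebra Λ ℝ satisfying D·D = 0. For t ∈ ℝ, let D_t denote the matrix over Λ obtained by applying the specialization at z = T^t to every entry; then D_t·D_t = 0, so the range of the Λ-linear map v ↦ D_t·v is contained in its kernel. Then there exist c ∈ ℕ and a finite set F ⊆ ℝ such that for every t ∉ F, the Λ-dimension of the homology ker(D_t)/im(D_t) (the quotient of the kernel of v ↦ D_t·v by the range of v ↦ D_t·v) equals c. In other words, the dimension of the homology of the specialized 2-periodic complex is constant in t with finitely many exceptions. -/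

import Mathlib

set_option synthInstance.maxHeartbeats 1000000
set_option maxHeartbeats 1000000
set_option maxSynthPendingDepth 3

/-- The Novikov field `Λ = ℂ((T^ℝ))`, realized as Hahn series. -/
local notation "Λ" => HahnSeries ℝ ℂ

/-- The specialization of a finite formal sum `f = Σ_r f(r)·z^r ∈ Λ[z^ℝ]` at `z = T^t`:
`f(T^t) = Σ_{r ∈ supp f} f(r)·T^{t·r} ∈ Λ`. -/
noncomputable def specializeAt (t : ℝ) (f : AddMonoidAlgebra Λ ℝ) : Λ :=
  ∑ r ∈ f.coeff.support, f.coeff r * HahnSeries.single (t * r) (1 : ℂ)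

noncomputable instance : IsDomain (AddMonoidAlgebra Λ ℝ) := NoZeroDivisors.to_isDomain _

/-- Specialization as a ring homomorphism. -/
noncomputable def specHom (t : ℝ) : AddMonoidAlgebra Λ ℝ →+* Λ :=
  AddMonoidAlgebra.liftNCRingHom (RingHom.id Λ)
    { toFun := fun r => HahnSeries.single (t * (Multiplicative.toAdd r)) (1 : ℂ)
      map_one' := by simp
      map_mul' := fun a b => by
        rw [HahnSeries.single_mul_single, mul_one]
        simp [mul_add] }
    (fun x y => Commute.all _ _)

lemma specHom_apply (t : ℝ) (f : AddMonoidAlgebra Λ ℝ) : specHom t f = specializeAt t f := by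
  have : specHom t f = Finsupp.sum f.coeff fun a b => b * HahnSeries.single (t * a) (1 : ℂ) := by
    rw [specHom, AddMonoidAlgebra.liftNCRingHom]
    exact Finsupp.liftAddHom_apply _ _
  rw [this, specializeAt, Finsupp.sum]

noncomputable def coeffHom (a : ℝ) : Λ →+ ℂ where
  toFun x := x.coeff a
  map_zero' := rfl
  map_add' _ _ := HahnSeries.coeff_add

/-- A nonzero element of `Λ[z^ℝ]` specializes to zero at only finitely many `t`. -/
lemma finite_zeros {f : AddMonoidAlgebra Λ ℝ} (hf : f ≠ 0) :
    {t : ℝ | specializeAt t f = 0}.Finite := by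
  classical
  set S := f.coeff.support with hS
  have hSne : S.Nonempty := Finsupp.support_nonempty_iff.2 (mt AddMonoidAlgebra.coeff_eq_zero.1 hf)
  set F : Set ℝ := ↑((S ×ˢ S).image
    (fun p => ((f.coeff p.2).order - (f.coeff p.1).order) / (p.1 - p.2))) with hF
  apply Set.Finite.subset (Finset.finite_toSet _) (s := F)
  intro t ht
  simp only [Set.mem_setOf_eq] at ht
  by_contra htF
  set g : ℝ → ℝ := fun r => (f.coeff r).order + t * r with hg
  have hinj : ∀ r ∈ S, ∀ s ∈ S, g r = g s → r = s := by
    intro r hr s hs hgs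
    by_contra hne
    apply htF
    have hrs : r - s ≠ 0 := sub_ne_zero.2 hne
    have : t = ((f.coeff s).order - (f.coeff r).order) / (r - s) := by
      have hgs' : (f.coeff r).order + t*r = (f.coeff s).order + t*s := hgs
      have hms := mul_sub t r s
      field_simp
      linarith [hgs', hms]
    simp only [hF, Finset.coe_image, Set.mem_image, Finset.mem_coe, Finset.mem_product]
    exact ⟨(r, s), by simpa using ⟨hr, hs⟩, this.symm⟩
  obtain ⟨r0, hr0S, hr0min⟩ := S.exists_min_image g hSne
  have hterm : ∀ r ∈ S, f.coeff r * HahnSeries.single (t * r) (1 : ℂ) ≠ 0 ∧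
      (f.coeff r * HahnSeries.single (t * r) (1 : ℂ)).order = g r := by
    intro r hr
    have hfr : f.coeff r ≠ 0 := Finsupp.mem_support_iff.1 hr
    have hs : (HahnSeries.single (t * r) (1 : ℂ)) ≠ 0 := by
      intro h
      exact one_ne_zero (HahnSeries.single_eq_zero_iff.mp h)
    refine ⟨mul_ne_zero hfr hs, ?_⟩
    rw [HahnSeries.order_mul hfr hs, HahnSeries.order_single one_ne_zero]
  have hcoeff : (specializeAt t f).coeff (g r0) ≠ 0 := by
    rw [specializeAt, ← hS]
    have : (∑ r ∈ S, f.coeff r * HahnSeries.single (t * r) (1 : ℂ)).coeff (g r0)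
        = ∑ r ∈ S, (f.coeff r * HahnSeries.single (t * r) (1 : ℂ)).coeff (g r0) :=
      map_sum (coeffHom (g r0)) _ S
    rw [this, Finset.sum_eq_single_of_mem r0 hr0S]
    · exact (hterm r0 hr0S).2 ▸ HahnSeries.coeff_order_eq_zero.not.2 (hterm r0 hr0S).1
    · intro r hr hne
      apply HahnSeries.coeff_eq_zero_of_lt_order
      rw [(hterm r hr).2]
      rcases lt_or_eq_of_le (hr0min r hr) with h | h
      · exact h
      · exact absurd (hinj r hr r0 hr0S h.symm) hne
  exact hcoeff (by rw [ht]; rfl)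

/-- Mapping a scalar multiple of a matrix through a ring hom. -/
lemma map_smul_ringHom {α β : Type*} [CommRing α] [CommRing β] {m n : Type*}
    (ψ : α →+* β) (d : α) (M : Matrix m n α) :
    (d • M).map ψ = ψ d • M.map ψ := by
  ext i j
  simp [Matrix.map_apply, Matrix.smul_apply, smul_eq_mul, map_mul]

/-- Rank is unchanged under multiplication by a nonzero scalar, over a field. -/
lemma rank_smul_field {K : Type*} [Field K] {m n : Type*} [Fintype m] [Fintype n]
    [DecidableEq m] (c : K) (hc : c ≠ 0) (A : Matrix m n K) :
    (c • A).rank = A.rank := by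
  rw [Matrix.smul_eq_diagonal_mul]
  apply Matrix.rank_mul_eq_right_of_isUnit_det
  rw [Matrix.det_diagonal]
  simpa [Finset.prod_const] using (IsUnit.mk0 c hc).pow (Fintype.card m)

/-- Rank factorization certificates over a field. -/
lemma exists_rank_certificates {K : Type*} [Field K] (N : ℕ)
    (M : Matrix (Fin N) (Fin N) K) :
    ∃ (B : Matrix (Fin N) (Fin M.rank) K) (C : Matrix (Fin M.rank) (Fin N) K)
      (X : Matrix (Fin M.rank) (Fin N) K) (Y : Matrix (Fin N) (Fin M.rank) K),
      B * C = M ∧ X * M * Y = 1 := by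
  classical
  set f := M.mulVecLin with hfdef
  set V := LinearMap.range f with hV
  have hfr : Module.finrank K V = M.rank := rfl
  let bV : Module.Basis (Fin M.rank) K V := Module.finBasisOfFinrankEq K V hfr
  let e : V ≃ₗ[K] (Fin M.rank → K) := bV.equivFun
  let h : (Fin M.rank → K) →ₗ[K] (Fin N → K) := V.subtype ∘ₗ e.symm.toLinearMap
  have hinj : Function.Injective h := V.injective_subtype.comp e.symm.injective
  obtain ⟨w, hw⟩ := h.exists_leftInverse_of_injective (LinearMap.ker_eq_bot.2 hinj)
  obtain ⟨s, hs⟩ := f.rangeRestrict.exists_rightInverse_of_surjective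
    (LinearMap.range_eq_top.2 f.surjective_rangeRestrict)
  have hfs : ∀ v : V, f (s v) = (v : Fin N → K) := by
    intro v
    have h1 : f.rangeRestrict (s v) = v := LinearMap.ext_iff.1 hs v
    have : ((f.rangeRestrict (s v)) : Fin N → K) = f (s v) := rfl
    rw [← this, h1]
  have hMf : LinearMap.toMatrix' f = M := by
    rw [hfdef, ← Matrix.toLin'_apply' M, LinearMap.toMatrix'_toLin']
  refine ⟨LinearMap.toMatrix' h, LinearMap.toMatrix' (e.toLinearMap ∘ₗ f.rangeRestrict),
    LinearMap.toMatrix' w, LinearMap.toMatrix' (s ∘ₗ e.symm.toLinearMap), ?_, ?_⟩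
  · rw [← LinearMap.toMatrix'_comp]
    have hcomp : h ∘ₗ (e.toLinearMap ∘ₗ f.rangeRestrict) = f := by
      apply LinearMap.ext
      intro x
      simp only [h, LinearMap.comp_apply, LinearEquiv.coe_coe]
      rw [LinearEquiv.symm_apply_apply]
      rfl
    rw [hcomp]
    exact hMf
  · have key : LinearMap.toMatrix' w * LinearMap.toMatrix' f
        * LinearMap.toMatrix' (s ∘ₗ e.symm.toLinearMap) = 1 := by
      rw [← LinearMap.toMatrix'_comp, ← LinearMap.toMatrix'_comp]
      have hcomp2 : (w ∘ₗ f) ∘ₗ (s ∘ₗ e.symm.toLinearMap) = LinearMap.id := by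
        apply LinearMap.ext
        intro x
        have h2 : f (s (e.symm x)) = ((e.symm x : V) : Fin N → K) := hfs (e.symm x)
        simp only [LinearMap.comp_apply, LinearEquiv.coe_coe, LinearMap.id_apply]
        rw [h2]
        have h3 : ((e.symm x : V) : Fin N → K) = h x := rfl
        rw [h3]
        exact LinearMap.ext_iff.1 hw x
      rw [hcomp2, LinearMap.toMatrix'_id]
    rw [hMf] at key
    exact key

/-- Clearing denominators of a matrix over the fraction field. -/
lemma exists_denominator {R : Type*} [CommRing R] [IsDomain R]
    {m n : Type*} [Fintype m] [Fintype n]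
    (Z : Matrix m n (FractionRing R)) :
    ∃ (d : R) (Z' : Matrix m n R), d ≠ 0 ∧
      Z'.map (algebraMap R (FractionRing R)) = (algebraMap R (FractionRing R)) d • Z := by
  classical
  obtain ⟨b, hb⟩ := IsLocalization.exist_integer_multiples (nonZeroDivisors R)
    (Finset.univ : Finset (m × n)) (fun p => Z p.1 p.2)
  choose Z' hZ' using fun p : m × n => hb p (Finset.mem_univ p)
  refine ⟨(b : R), Matrix.of fun i j => Z' (i, j), mem_nonZeroDivisors_iff_ne_zero.1 b.2, ?_⟩
  ext i j
  rw [Matrix.map_apply, Matrix.smul_apply, Matrix.of_apply]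
  rw [hZ' (i, j)]
  rw [Algebra.smul_def, Algebra.smul_def]
  rfl

theorem homology_dim_specialized_complex_constant_cofinite (N : ℕ)
    (D : Matrix (Fin N) (Fin N) (AddMonoidAlgebra Λ ℝ)) (hD : D * D = 0) :
    ∃ (c : ℕ) (F : Set ℝ), F.Finite ∧
      ∀ t : ℝ, t ∉ F →
        Module.finrank Λ
          (↥(LinearMap.ker (Matrix.mulVecLin (D.map (specializeAt t)))) ⧸
            Submodule.comap
              (LinearMap.ker (Matrix.mulVecLin (D.map (specializeAt t)))).subtype
              (LinearMap.range (Matrix.mulVecLin (D.map (specializeAt t))))) = c := by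
  classical
  set K := FractionRing (AddMonoidAlgebra Λ ℝ) with hK
  set algK := algebraMap (AddMonoidAlgebra Λ ℝ) K with halgK
  have halgInj : Function.Injective algK := IsFractionRing.injective (AddMonoidAlgebra Λ ℝ) K
  set M : Matrix (Fin N) (Fin N) K := D.map algK with hM
  set r := M.rank with hr
  obtain ⟨B, C, X, Y, hBC, hXY⟩ := exists_rank_certificates N M
  obtain ⟨dB, B', hdB, hB'⟩ := exists_denominator B
  obtain ⟨dC, C', hdC, hC'⟩ := exists_denominator C
  obtain ⟨dX, X', hdX, hX'⟩ := exists_denominator X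
  obtain ⟨dY, Y', hdY, hY'⟩ := exists_denominator Y
  -- the two identities over R
  have key1 : B' * C' = (dB * dC) • D := by
    apply Matrix.ext
    intro i j
    apply halgInj
    have h1 : (B' * C').map algK = ((dB * dC) • D).map algK := by
      rw [Matrix.map_mul, hB', hC', map_smul_ringHom, Matrix.smul_mul, Matrix.mul_smul,
        hBC, smul_smul, map_mul, ← hM]
    have := congrFun (congrFun h1 i) j
    simpa [Matrix.map_apply] using this
  have key2 : X' * D * Y' = ((dX * dY) • (1 : Matrix (Fin r) (Fin r) (AddMonoidAlgebra Λ ℝ))) := by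
    apply Matrix.ext
    intro i j
    apply halgInj
    have h1 : (X' * D * Y').map algK = ((dX * dY) • (1 : Matrix (Fin r) (Fin r) (AddMonoidAlgebra Λ ℝ))).map algK := by
      rw [Matrix.map_mul, Matrix.map_mul, hX', hY', map_smul_ringHom, ← hM,
        Matrix.smul_mul, Matrix.smul_mul, Matrix.mul_smul, hXY, smul_smul, map_mul]
      congr 1
      ext a b
      simp [Matrix.map_apply, Matrix.one_apply, apply_ite algK]
    have := congrFun (congrFun h1 i) j
    simpa [Matrix.map_apply] using this
  -- the bad set
  set P := dB * dC * (dX * dY) with hP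
  have hPne : P ≠ 0 := mul_ne_zero (mul_ne_zero hdB hdC) (mul_ne_zero hdX hdY)
  refine ⟨N - 2 * r, {t : ℝ | specializeAt t P = 0}, finite_zeros hPne, ?_⟩
  intro t ht
  simp only [Set.mem_setOf_eq] at ht
  rw [← specHom_apply] at ht
  set φ := specHom t with hφ
  have hφBC : φ (dB * dC) ≠ 0 := fun h => ht (by rw [hP, map_mul, h, zero_mul])
  have hφXY : φ (dX * dY) ≠ 0 := fun h => ht (by rw [hP, map_mul, h, mul_zero])
  have hmapeq : D.map (specializeAt t) = D.map ⇑φ :=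
    Matrix.ext fun i j => (specHom_apply t (D i j)).symm
  set A : Matrix (Fin N) (Fin N) Λ := D.map ⇑φ with hA
  rw [hmapeq]
  -- rank of A is r
  have hrankA : A.rank = r := by
    apply le_antisymm
    · have h1 : φ (dB * dC) • A = B'.map ⇑φ * C'.map ⇑φ := by
        rw [← Matrix.map_mul, key1, map_smul_ringHom]
      calc A.rank = (φ (dB * dC) • A).rank := (rank_smul_field _ hφBC _).symm
        _ = (B'.map ⇑φ * C'.map ⇑φ).rank := by rw [h1]
        _ ≤ (B'.map ⇑φ).rank := Matrix.rank_mul_le_left _ _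
        _ ≤ Fintype.card (Fin r) := Matrix.rank_le_card_width _
        _ = r := Fintype.card_fin r
    · have h2 : X'.map ⇑φ * A * Y'.map ⇑φ = φ (dX * dY) • (1 : Matrix (Fin r) (Fin r) Λ) := by
        rw [← Matrix.map_mul, ← Matrix.map_mul, key2, map_smul_ringHom]
        congr 1
        ext a b
        simp [Matrix.map_apply, Matrix.one_apply, apply_ite φ]
      calc r = Fintype.card (Fin r) := (Fintype.card_fin r).symm
        _ = (1 : Matrix (Fin r) (Fin r) Λ).rank := Matrix.rank_one.symm
        _ = (φ (dX * dY) • (1 : Matrix (Fin r) (Fin r) Λ)).rank :=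
            (rank_smul_field _ hφXY _).symm
        _ = (X'.map ⇑φ * A * Y'.map ⇑φ).rank := by rw [h2]
        _ = (X'.map ⇑φ * (A * Y'.map ⇑φ)).rank := by rw [Matrix.mul_assoc]
        _ ≤ (A * Y'.map ⇑φ).rank := Matrix.rank_mul_le_right _ _
        _ ≤ A.rank := Matrix.rank_mul_le_left _ _
  -- homology dimension
  have hAA : A * A = 0 := by
    rw [hA, ← Matrix.map_mul, hD]
    exact Matrix.map_zero _ (map_zero φ)
  have hrange_le_ker : LinearMap.range A.mulVecLin ≤ LinearMap.ker A.mulVecLin := by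
    rw [LinearMap.range_le_ker_iff, ← Matrix.mulVecLin_mul, hAA]
    exact Matrix.mulVecLin_zero
  have e1 := Submodule.comapSubtypeEquivOfLe hrange_le_ker
  have h3 : Module.finrank Λ
      (Submodule.comap (LinearMap.ker A.mulVecLin).subtype (LinearMap.range A.mulVecLin))
      = Module.finrank Λ (LinearMap.range A.mulVecLin) := e1.finrank_eq
  have h4 := Submodule.finrank_quotient_add_finrank
    (Submodule.comap (LinearMap.ker A.mulVecLin).subtype (LinearMap.range A.mulVecLin))
  have h5 := LinearMap.finrank_range_add_finrank_ker A.mulVecLin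
  have h6 : Module.finrank Λ (Fin N → Λ) = N := Module.finrank_fin_fun Λ
  have h7 : Module.finrank Λ (LinearMap.range A.mulVecLin) = r := hrankA
  rw [h6] at h5
  rw [h3, h7] at h4
  rw [h7] at h5
  -- also r ≤ finrank ker
  have h8 : r ≤ Module.finrank Λ (LinearMap.ker A.mulVecLin) := by
    rw [← h7]
    exact Submodule.finrank_mono hrange_le_ker
  omega
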